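/- Let n = q^m with m ≥ 2, let F_n = {ω_1, ..., ω_n} be the field of order n, and let C'_1, ..., C'_n be a partition of a q-ary distance-2 MDS code of length n into q-ary codes each having parameters (n, q^{n-m-1}, 3) (Reed–Muller-like codes of order (q-1)m-2). Then C = {(ω_i | v) : v ∈ C'_i, i = 1, ..., n} is a 1-perfect mixed code in F_n × F_q^n. -/

import Mathlib

open Finset


-- distance from an update
lemma hd_update {n : ℕ} {F : Type*} [Fintype F] [DecidableEq F]
    (u : Fin n → F) (i : Fin n) (a : F) (ha : a ≠ u i) :
    hammingDist (Function.update u i a) u = 1 := by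
  have : ({j | Function.update u i a j ≠ u j} : Finset (Fin n)) = {i} := by
    ext j
    by_cases h : j = i <;> simp [Function.update_apply, h, ha]
  simp [hammingDist, this]

lemma ball1_card {n : ℕ} {F : Type*} [Fintype F] [DecidableEq F] (u : Fin n → F) :
    ({v : Fin n → F | hammingDist v u ≤ 1} : Finset _).card
      = 1 + n * (Fintype.card F - 1) := by
  classical
  have hsplit : ({v : Fin n → F | hammingDist v u ≤ 1} : Finset _)
      = insert u ({v : Fin n → F | hammingDist v u = 1} : Finset _) := by
    ext v
    simp only [mem_filter, mem_univ, true_and, mem_insert, Finset.mem_filter]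
    constructor
    · intro h
      rcases Nat.le_one_iff_eq_zero_or_eq_one.1 h with h0 | h1
      · exact Or.inl (hammingDist_eq_zero.1 h0)
      · exact Or.inr (by simpa using h1)
    · rintro (rfl | h)
      · simp [hammingDist_self]
      · omega
  rw [hsplit, card_insert_of_notMem (by simp)]
  have hbij : (Finset.univ.sigma fun i : Fin n =>
      (Finset.univ.filter fun a : F => a ≠ u i)).card
      = ({v : Fin n → F | hammingDist v u = 1} : Finset _).card := by
    apply Finset.card_bij (fun p _ => Function.update u p.1 p.2)
    · rintro ⟨i, a⟩ hp
      simp only [mem_sigma, mem_univ, true_and, mem_filter] at hp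
      simp only [mem_filter, mem_univ, true_and]
      exact hd_update u i a hp
    · rintro ⟨i, a⟩ hp ⟨j, b⟩ hq hE
      simp only [mem_sigma, mem_univ, true_and, mem_filter] at hp hq
      by_cases hij : i = j
      · subst hij
        have := congrFun hE i
        simp at this
        simp [this]
      · have := congrFun hE i
        rw [Function.update_apply, Function.update_apply] at this
        simp [hij] at this
        exact absurd this hp
    · intro v hv
      simp only [mem_filter, mem_univ, true_and] at hv
      obtain ⟨i, hi⟩ := Finset.card_eq_one.1 hv
      have hiu : v i ≠ u i := by
        have : i ∈ ({j | v j ≠ u j} : Finset (Fin n)) := by rw [hi]; simp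
        simpa using this
      refine ⟨⟨i, v i⟩, by simp [hiu], ?_⟩
      funext j
      by_cases hj : j = i
      · subst hj; simp
      · have : j ∉ ({j | v j ≠ u j} : Finset (Fin n)) := by rw [hi]; simpa using hj
        simp only [Finset.mem_filter, mem_univ, true_and, not_not] at this
        simp [Function.update_apply, hj, this]
  have hcnt : ∀ i : Fin n, (Finset.univ.filter fun a : F => a ≠ u i).card
      = Fintype.card F - 1 := by
    intro i
    rw [Finset.filter_ne' Finset.univ (u i), Finset.card_erase_of_mem (mem_univ _)]
    simp
  rw [← hbij, Finset.card_sigma]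
  simp [hcnt, Finset.sum_const, mul_comm]
  ring

/-- Construction of 1-perfect mixed codes in `F_n × F_q^n`, `n = q^m`:
if `C'_ω` (indexed by `ω ∈ F_n`) is a partition of a `q`-ary distance-2 MDS code of
length `n` into Reed–Muller-like codes with parameters `(n, q^{n-m-1}, 3)_q`, then
`C = {(ω, v) : v ∈ C'_ω}` is a 1-perfect code in `F_n × F_q^n`. -/
theorem mixed_perfect_from_RM_like (q m : ℕ) (hm : 2 ≤ m)
    (K F : Type*) [Field K] [Fintype K] [DecidableEq K]
    [Field F] [Fintype F] [DecidableEq F]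
    (hK : Fintype.card K = q ^ m) (hF : Fintype.card F = q)
    (C' : K → Set (Fin (q ^ m) → F))
    (hdisj : ∀ ω ω', ω ≠ ω' → Disjoint (C' ω) (C' ω'))
    -- the union of the parts is a distance-2 MDS code of length n = q^m
    (hMDScard : (⋃ ω, C' ω).ncard = q ^ (q ^ m - 1))
    (hMDSdist : ∀ u ∈ ⋃ ω, C' ω, ∀ v ∈ ⋃ ω, C' ω, u ≠ v → 2 ≤ hammingDist u v)
    (hMDSdist2 : ∃ u ∈ ⋃ ω, C' ω, ∃ v ∈ ⋃ ω, C' ω, u ≠ v ∧ hammingDist u v = 2)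
    -- each part is a Reed–Muller-like code with parameters (n, q^{n-m-1}, 3)_q
    (hcard : ∀ ω, (C' ω).ncard = q ^ (q ^ m - m - 1))
    (hdist : ∀ ω, ∀ u ∈ C' ω, ∀ v ∈ C' ω, u ≠ v → 3 ≤ hammingDist u v)
    (hdist3 : ∀ ω, ∃ u ∈ C' ω, ∃ v ∈ C' ω, u ≠ v ∧ hammingDist u v = 3) :
    ∀ w : K × (Fin (q ^ m) → F), ∃! c : K × (Fin (q ^ m) → F),
      c.2 ∈ C' c.1 ∧
      (if w.1 = c.1 then 0 else 1) + hammingDist w.2 c.2 ≤ 1 := by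
  classical
  have hq : 2 ≤ q := by
    have h1 : 1 < Fintype.card F := Fintype.one_lt_card
    omega
  have hnm : m + 1 ≤ q ^ m := by
    have h1 : m < 2 ^ m := Nat.lt_two_pow_self
    have h2 : 2 ^ m ≤ q ^ m := Nat.pow_le_pow_left hq m
    omega
  -- balls
  set B : K × (Fin (q ^ m) → F) → Finset (K × (Fin (q ^ m) → F)) := fun c =>
    {w | (if w.1 = c.1 then 0 else 1) + hammingDist w.2 c.2 ≤ 1} with hB
  have mem_ball : ∀ w c, w ∈ B c ↔
      (w.1 = c.1 ∧ hammingDist w.2 c.2 ≤ 1) ∨ (w.1 ≠ c.1 ∧ w.2 = c.2) := by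
    intro w c
    simp only [hB, Finset.mem_filter, Finset.mem_univ, true_and]
    by_cases h : w.1 = c.1
    · simp [h]
    · simp only [if_neg h]
      constructor
      · intro hle
        exact Or.inr ⟨h, hammingDist_eq_zero.1 (by omega)⟩
      · rintro (⟨hc, _⟩ | ⟨_, hv⟩)
        · exact absurd hc h
        · rw [hv]; simp [hammingDist_self]
  -- the code as a finset
  set CF : Finset (K × (Fin (q ^ m) → F)) := {c | c.2 ∈ C' c.1} with hCF
  have mem_CF : ∀ c, c ∈ CF ↔ c.2 ∈ C' c.1 := by
    intro c; simp [hCF]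
  have hunion : ∀ ω v, v ∈ C' ω → v ∈ ⋃ ω', C' ω' := fun ω v h =>
    Set.mem_iUnion.2 ⟨ω, h⟩
  have hdiffparts : ∀ ω ω' v, ω ≠ ω' → v ∈ C' ω → v ∈ C' ω' → False := by
    intro ω ω' v hne h1 h2
    exact Set.disjoint_left.1 (hdisj ω ω' hne) h1 h2
  -- disjointness of balls
  have hBdisj : ∀ c ∈ CF, ∀ c' ∈ CF, c ≠ c' → Disjoint (B c) (B c') := by
    intro c hc c' hc' hne
    rw [mem_CF] at hc hc'
    rw [Finset.disjoint_left]
    intro w hw hw'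
    rw [mem_ball] at hw hw'
    rcases hw with ⟨he, hd⟩ | ⟨he, hv⟩ <;> rcases hw' with ⟨he', hd'⟩ | ⟨he', hv'⟩
    · -- same first coordinate
      have h1 : c.1 = c'.1 := he ▸ he'
      have h2 : c.2 ≠ c'.2 := by
        intro h; exact hne (Prod.ext h1 h)
      have hc2 : c'.2 ∈ C' c.1 := h1 ▸ hc'
      have h3 := hdist c.1 c.2 hc c'.2 hc2 h2
      have h4 := hammingDist_triangle c.2 w.2 c'.2
      have h5 : hammingDist c.2 w.2 ≤ 1 := by rw [hammingDist_comm]; exact hd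
      omega
    · -- w.1 = c.1, w.2 = c'.2, c.1 ≠ c'.1
      have h1 : c.1 ≠ c'.1 := fun h => he' (he.trans h)
      have h2 : c.2 ≠ c'.2 := fun h =>
        hdiffparts c.1 c'.1 c.2 h1 hc (h ▸ hc')
      have h3 := hMDSdist c.2 (hunion _ _ hc) c'.2 (hunion _ _ hc') h2
      have h4 : hammingDist c.2 c'.2 ≤ 1 := by
        rw [← hv', hammingDist_comm]; exact hd
      omega
    · -- symmetric
      have h1 : c.1 ≠ c'.1 := fun h => he (he'.trans h.symm)
      have h2 : c.2 ≠ c'.2 := fun h =>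
        hdiffparts c.1 c'.1 c.2 h1 hc (h ▸ hc')
      have h3 := hMDSdist c.2 (hunion _ _ hc) c'.2 (hunion _ _ hc') h2
      have h4 : hammingDist c.2 c'.2 ≤ 1 := by
        rw [← hv]; exact hd'
      omega
    · -- w.2 = c.2 = c'.2
      have h2 : c.2 = c'.2 := hv ▸ hv'
      have h1 : c.1 ≠ c'.1 := by
        intro h; exact hne (Prod.ext h h2)
      exact hdiffparts c.1 c'.1 c.2 h1 hc (h2 ▸ hc')
  -- ball cardinality
  have hBcard : ∀ c, (B c).card = q ^ (m + 1) := by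
    intro c
    have hdj : Disjoint
        (({c.1} : Finset K) ×ˢ ({v : Fin (q ^ m) → F | hammingDist v c.2 ≤ 1} : Finset _))
        ((Finset.univ.erase c.1) ×ˢ ({c.2} : Finset (Fin (q ^ m) → F))) := by
      rw [Finset.disjoint_left]
      rintro ⟨a, v⟩ h1 h2
      simp only [Finset.mem_product, Finset.mem_singleton, Finset.mem_erase] at h1 h2
      exact h2.1.1 h1.1
    have hsplit : B c
        = (({c.1} : Finset K) ×ˢ ({v : Fin (q ^ m) → F | hammingDist v c.2 ≤ 1} : Finset _))
        ∪ ((Finset.univ.erase c.1) ×ˢ ({c.2} : Finset (Fin (q ^ m) → F))) := by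
      ext w
      rw [mem_ball]
      simp only [Finset.mem_union, Finset.mem_product, Finset.mem_singleton,
        Finset.mem_erase, Finset.mem_filter, Finset.mem_univ, true_and, and_true]
      try tauto
    rw [hsplit, Finset.card_union_of_disjoint hdj, Finset.card_product,
      Finset.card_product, ball1_card, Finset.card_singleton,
      Finset.card_erase_of_mem (Finset.mem_univ _), Finset.card_singleton,
      Finset.card_univ, hK, hF]
    set r := q - 1 with hr
    have h2 : q ^ (m + 1) = q ^ m * r + q ^ m := by
      rw [pow_succ]
      have hq' : q = r + 1 := by omega
      rw [hq', Nat.mul_succ]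
    omega
  -- code cardinality
  have hCFcard : CF.card = q ^ m * q ^ (q ^ m - m - 1) := by
    have hsplit : CF = Finset.univ.biUnion
        (fun ω : K => {ω} ×ˢ (C' ω).toFinite.toFinset) := by
      ext c
      rw [mem_CF]
      simp only [Finset.mem_biUnion, Finset.mem_univ, true_and, Finset.mem_product,
        Finset.mem_singleton, Set.Finite.mem_toFinset]
      constructor
      · intro h; exact ⟨c.1, rfl, h⟩
      · rintro ⟨ω, rfl, h⟩; exact h
    have hkey : ∀ ω : K, ({ω} ×ˢ (C' ω).toFinite.toFinset).card
        = q ^ (q ^ m - m - 1) := by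
      intro ω
      rw [Finset.card_product, Finset.card_singleton, one_mul,
        ← Set.ncard_eq_toFinset_card (C' ω), hcard ω]
    rw [hsplit, Finset.card_biUnion]
    · rw [Finset.sum_congr rfl (fun ω _ => hkey ω), Finset.sum_const,
        Finset.card_univ, hK, smul_eq_mul]
    · intro ω _ ω' _ hne
      simp only [Function.onFun]
      rw [Finset.disjoint_left]
      rintro ⟨a, v⟩ h1 h2
      simp only [Finset.mem_product, Finset.mem_singleton] at h1 h2
      exact hne (h1.1 ▸ h2.1 ▸ rfl)
  -- coverage
  have hcover : CF.biUnion B = Finset.univ := by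
    apply Finset.eq_univ_of_card
    rw [Finset.card_biUnion hBdisj,
      Finset.sum_congr rfl (fun c _ => hBcard c), Finset.sum_const, smul_eq_mul,
      hCFcard, Fintype.card_prod, hK, Fintype.card_fun, hF, Fintype.card_fin,
      mul_assoc, ← pow_add]
    have harith : q ^ m - m - 1 + (m + 1) = q ^ m := by omega
    rw [harith]
  -- conclude
  intro w
  have hw : w ∈ CF.biUnion B := by rw [hcover]; exact Finset.mem_univ w
  obtain ⟨c, hcCF, hcB⟩ := Finset.mem_biUnion.1 hw
  refine ⟨c, ⟨(mem_CF c).1 hcCF, ?_⟩, ?_⟩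
  · have h := hcB
    simp only [hB, Finset.mem_filter, Finset.mem_univ, true_and] at h
    exact h
  · rintro c' ⟨hc'1, hc'2⟩
    by_contra hne
    have hc'CF : c' ∈ CF := (mem_CF c').2 hc'1
    have hc'B : w ∈ B c' := by
      simp only [hB, Finset.mem_filter, Finset.mem_univ, true_and]
      exact hc'2
    exact Finset.disjoint_left.1 (hBdisj c' hc'CF c hcCF hne) hc'B hcB
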